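/- (Subcriticality of Boolean percolation on doubling graphs) Let Γ be a countably infinite connected doubling graph with Assouad dimension dim_A(Γ), and let (𝒳,ℛ) be a Bernoulli marked point process on Γ with retention parameter p and i.i.d. radii with law ν. If E_ν[R^{dim_A(Γ)}] < ∞, then there exists p₀ > 0 such that for all p ≤ p₀, almost surely every connected component of the random graph 𝒢(𝒳,ℛ) is finite. -/

import Mathlib

open MeasureTheory ProbabilityTheory ENNReal

/-- Adjacency relation of the random graph `𝒢(𝒳,ℛ)` in configuration `ω`:
`{u,w}` is an edge iff `X_u = 1` and `w ∈ B(u, R_u)`, or `X_w = 1` and `u ∈ B(w, R_w)`. -/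
def boolRel {V Ω : Type*} (G : SimpleGraph V) (X : V → Ω → Bool) (R : V → Ω → ℕ)
    (ω : Ω) (u w : V) : Prop :=
  (X u ω = true ∧ G.dist u w ≤ R u ω) ∨ (X w ω = true ∧ G.dist w u ≤ R w ω)

section Count
variable {V : Type*} [Countable V] {G : SimpleGraph V}
variable {dimA C' : ℝ}

lemma cardBall (hconn : G.Connected) (hC' : 0 < C') (hdimA : 0 < dimA)
    (hdim : ∀ (v : V) (r : ℕ), 1 ≤ r → ∀ ε : ℝ, 0 < ε → ε < 1 →
      ∀ s : Finset V, (∀ x ∈ s, G.dist v x ≤ r) →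
        (∀ x ∈ s, ∀ y ∈ s, x ≠ y → ε * r ≤ (G.dist x y : ℝ)) →
        (s.card : ℝ) ≤ C' * ε ^ (-dimA))
    (w : V) (t : ℕ) (ht : 1 ≤ t) (F : Finset V) (hF : ∀ x ∈ F, G.dist w x ≤ t) :
    (F.card : ℝ) ≤ C' * (2 * t : ℝ) ^ dimA := by
  have ht' : (1:ℝ) ≤ (t:ℝ) := by exact_mod_cast ht
  have h2t : (0:ℝ) < 2 * t := by linarith
  have hε : (0:ℝ) < (2 * t : ℝ)⁻¹ := by positivity
  have hε1 : ((2 * t : ℝ))⁻¹ < 1 := by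
    rw [inv_lt_one_iff₀]; right; linarith
  have key := hdim w t ht _ hε hε1 F hF ?_
  · calc (F.card : ℝ) ≤ C' * ((2 * t : ℝ)⁻¹) ^ (-dimA) := key
      _ = C' * (2 * t : ℝ) ^ dimA := by
        rw [Real.inv_rpow h2t.le, Real.rpow_neg h2t.le, inv_inv]
  · intro x hx y hy hxy
    have h1 : (1:ℝ) ≤ (G.dist x y : ℝ) := by
      exact_mod_cast SimpleGraph.Connected.pos_dist_of_ne hconn hxy
    have h2 : (2 * t : ℝ)⁻¹ * t ≤ 1 := by
      rw [inv_mul_le_iff₀ h2t]; nlinarith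
    linarith
end Count

set_option linter.unusedSectionVars false
set_option linter.unusedVariables false

section Count2
variable {V : Type*} {G : SimpleGraph V} {dimA C' : ℝ}

lemma ballFinite (hball : ∀ (w : V) (t : ℕ), 1 ≤ t → ∀ F : Finset V,
      (∀ x ∈ F, G.dist w x ≤ t) → (F.card : ℝ) ≤ C' * (2 * t : ℝ) ^ dimA)
    (w : V) (t : ℕ) : {u : V | G.dist w u ≤ t}.Finite := by
  by_contra h
  have h : Set.Infinite {u : V | G.dist w u ≤ t} := h
  obtain ⟨F, hFsub, hFcard⟩ := h.exists_subset_card_eq (⌈C' * (2 * (t+1) : ℝ) ^ dimA⌉₊ + 1)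
  have hb := hball w (t+1) (by omega) F (fun x hx => by
    have := hFsub hx; simp only [Set.mem_setOf_eq] at this; omega)
  rw [hFcard] at hb
  have : C' * (2 * ((t:ℝ)+1)) ^ dimA ≤ ⌈C' * (2 * ((t:ℝ)+1)) ^ dimA⌉₊ := Nat.le_ceil _
  push_cast at hb
  linarith

lemma tsumBall (hball : ∀ (w : V) (t : ℕ), 1 ≤ t → ∀ F : Finset V,
      (∀ x ∈ F, G.dist w x ≤ t) → (F.card : ℝ) ≤ C' * (2 * t : ℝ) ^ dimA)
    (w : V) (t : ℕ) (ht : 1 ≤ t) :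
    ∑' (u : V), (if G.dist w u ≤ t then (1:ℝ≥0∞) else 0)
      ≤ ENNReal.ofReal (C' * (2 * t : ℝ) ^ dimA) := by
  rw [ENNReal.tsum_eq_iSup_sum]
  refine iSup_le fun F => ?_
  have : (∑ u ∈ F, (if G.dist w u ≤ t then (1:ℝ≥0∞) else 0))
      = ((F.filter (fun u => G.dist w u ≤ t)).card : ℝ≥0∞) := by
    rw [Finset.card_eq_sum_ones, ← Finset.sum_filter]
    push_cast; simp
  rw [this]
  have hb := hball w t ht (F.filter (fun u => G.dist w u ≤ t))
    (fun x hx => (Finset.mem_filter.mp hx).2)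
  rw [← ENNReal.ofReal_natCast]
  exact ENNReal.ofReal_le_ofReal hb
end Count2

/-- an open chain in configuration `ω`. -/
def ChainP {V Ω : Type*} (G : SimpleGraph V) (X : V → Ω → Bool) (R : V → Ω → ℕ) (ω : Ω) (c : ℕ → V) (k : ℕ) : Prop :=
  (∀ i, i ≤ k → X (c i) ω = true) ∧
    ∀ i, i < k → G.dist (c i) (c (i+1)) ≤ R (c i) ω + R (c (i+1)) ω

/-- start link from `v`. -/
def StartL {V Ω : Type*} (G : SimpleGraph V) (X : V → Ω → Bool) (R : V → Ω → ℕ) (ω : Ω) (v : V) (c : ℕ → V) : Prop := c 0 = v ∨ G.dist v (c 0) ≤ R (c 0) ω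

/-- crossing event at center `w`, scale `r`. -/
def CrossSet {V Ω : Type*} (G : SimpleGraph V) (X : V → Ω → Bool) (R : V → Ω → ℕ) (w : V) (r : ℕ) : Set Ω :=
  {ω | ∃ (k : ℕ) (c : ℕ → V), ChainP G X R ω c k ∧ (∀ i, i ≤ k → R (c i) ω < r) ∧
    (∀ i, i ≤ k → G.dist w (c i) ≤ 102*r) ∧ G.dist w (c 0) ≤ 30*r ∧ 100*r ≤ G.dist w (c k)}

def HitSet {V Ω : Type*} (X : V → Ω → Bool) (R : V → Ω → ℕ) (u : V) (S : Set ℕ) : Set Ω := {ω | X u ω = true ∧ R u ω ∈ S}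

/-- error event: some open vertex has huge radius (relative to scale `s` and
its distance to `v`). -/
def UErrSet {V Ω : Type*} (G : SimpleGraph V) (X : V → Ω → Bool) (R : V → Ω → ℕ) (v : V) (s : ℕ) : Set Ω :=
  ⋃ u : V, HitSet X R u {m | s ≤ m ∧ G.dist v u ≤ m + 1020*s}

section Chains
variable {V Ω : Type*} {G : SimpleGraph V} {X : V → Ω → Bool} {R : V → Ω → ℕ}

lemma chain_extend {ω : Ω} {c : ℕ → V} {k : ℕ} {z : V} (h : ChainP G X R ω c k)
    (hz : X z ω = true) (hlink : G.dist (c k) z ≤ R (c k) ω + R z ω) :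
    ChainP G X R ω (fun i => if i ≤ k then c i else z) (k+1) := by
  obtain ⟨hopen, hlk⟩ := h
  constructor
  · intro i hi
    by_cases hik : i ≤ k
    · simpa [hik] using hopen i hik
    · simpa [hik] using hz
  · intro i hi
    rcases Nat.lt_or_ge i k with hik | hik
    · have h1 : i ≤ k := hik.le
      have h2 : i + 1 ≤ k := hik
      simpa [h1, h2] using hlk i hik
    · have : i = k := by omega
      subst this
      have h2 : ¬ (i + 1 ≤ i) := by omega
      simpa [le_refl, h2] using hlink

lemma reach_chain (hconn : G.Connected) {ω : Ω} {v w : V}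
    (hw : Relation.ReflTransGen (boolRel G X R ω) v w) (hXw : X w ω = true) :
    ∃ (k : ℕ) (c : ℕ → V), ChainP G X R ω c k ∧ StartL G X R ω v c ∧ c k = w := by
  -- invariant
  have key : ∀ u : V, Relation.ReflTransGen (boolRel G X R ω) v u →
      u = v ∨ ∃ (k : ℕ) (c : ℕ → V), ChainP G X R ω c k ∧ StartL G X R ω v c ∧
        (c k = u ∨ G.dist (c k) u ≤ R (c k) ω) := by
    intro u hu
    induction hu with
    | refl => exact Or.inl rfl
    | @tail b u hvb hbu ih =>
      right
      rcases hbu with ⟨hXb, hdb⟩ | ⟨hXu, hdu⟩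
      · -- X b true, dist b u ≤ R b
        rcases ih with rfl | ⟨k, c, hch, hst, hend⟩
        · -- b = v
          exact ⟨0, fun _ => b, ⟨fun i _ => hXb, fun i hi => by omega⟩, Or.inl rfl,
            Or.inr hdb⟩
        · rcases hend with rfl | hnear
          · exact ⟨k, c, hch, hst, Or.inr hdb⟩
          · -- extend by b
            refine ⟨k+1, _, chain_extend hch hXb (le_trans hnear (Nat.le_add_right _ _)), ?_, ?_⟩
            · rcases hst with h0 | h0 <;> [left; right] <;>
                simpa [Nat.zero_le k] using h0
            · right
              have hk1 : ¬ (k + 1 ≤ k) := by omega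
              simpa [hk1] using hdb
      · -- X u true, dist u b ≤ R u : extend chain to u
        rcases ih with rfl | ⟨k, c, hch, hst, hend⟩
        · -- b = v : single-vertex chain (u), start link dist v u ≤ R u
          refine ⟨0, fun _ => u, ⟨fun i _ => hXu, fun i hi => by omega⟩, Or.inr ?_, Or.inl rfl⟩
          rwa [SimpleGraph.dist_comm] at hdu
        · have hlink : G.dist (c k) u ≤ R (c k) ω + R u ω := by
            rcases hend with rfl | hnear
            · rw [SimpleGraph.dist_comm] at hdu; omega
            · have htri : G.dist (c k) u ≤ G.dist (c k) b + G.dist b u :=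
                SimpleGraph.Connected.dist_triangle hconn
              rw [SimpleGraph.dist_comm] at hdu
              omega
          refine ⟨k+1, _, chain_extend hch hXu hlink, ?_, Or.inl ?_⟩
          · rcases hst with h0 | h0 <;> [left; right] <;>
              simpa [Nat.zero_le k] using h0
          · have hk1 : ¬ (k + 1 ≤ k) := by omega
            simp [hk1]
  rcases key w hw with rfl | ⟨k, c, hch, hst, hend⟩
  · exact ⟨0, fun _ => w, ⟨fun i _ => hXw, fun i hi => by omega⟩, Or.inl rfl, rfl⟩
  · rcases hend with rfl | hnear
    · exact ⟨k, c, hch, hst, rfl⟩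
    · refine ⟨k+1, _, chain_extend hch hXw (le_trans hnear (Nat.le_add_right _ _)), ?_, ?_⟩
      · rcases hst with h0 | h0 <;> [left; right] <;> simpa [Nat.zero_le k] using h0
      · have hk1 : ¬ (k + 1 ≤ k) := by omega
        simp [hk1]

end Chains

lemma chain_mono {V Ω : Type*} {G : SimpleGraph V} {X : V → Ω → Bool} {R : V → Ω → ℕ}
    {ω : Ω} {c : ℕ → V} {k j : ℕ} (h : ChainP G X R ω c k) (hj : j ≤ k) :
    ChainP G X R ω c j :=
  ⟨fun i hi => h.1 i (hi.trans hj), fun i hi => h.2 i (lt_of_lt_of_le hi hj)⟩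

lemma perc_subset {V : Type*} {Ω : Type} {G : SimpleGraph V}
    {X : V → Ω → Bool} {R : V → Ω → ℕ} {dimA C' : ℝ}
    (hconn : G.Connected)
    (hball : ∀ (w : V) (t : ℕ), 1 ≤ t → ∀ F : Finset V,
      (∀ x ∈ F, G.dist w x ≤ t) → (F.card : ℝ) ≤ C' * (2 * t : ℝ) ^ dimA)
    (v : V) (s : ℕ) (hs : 1 ≤ s) :
    {ω | {u : V | Relation.ReflTransGen (boolRel G X R ω) v u}.Infinite}
      ⊆ CrossSet G X R v s ∪ UErrSet G X R v s := by
  classical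
  intro ω hω
  simp only [Set.mem_setOf_eq] at hω
  -- (a) a far open vertex in the component
  obtain ⟨w, hXw, hvw, hfar⟩ : ∃ w, X w ω = true ∧
      Relation.ReflTransGen (boolRel G X R ω) v w ∧ 100*s ≤ G.dist v w := by
    by_contra hno
    push_neg at hno
    set OB : Set V := {w : V | X w ω = true ∧ Relation.ReflTransGen (boolRel G X R ω) v w}
      with hOB
    have hOBfin : OB.Finite := by
      refine (ballFinite hball v (100*s)).subset ?_
      intro w hw
      have := hno w hw.1 hw.2
      simp only [Set.mem_setOf_eq]
      omega
    have hsub : {u : V | Relation.ReflTransGen (boolRel G X R ω) v u} ⊆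
        {v} ∪ ⋃ (w : V) (_ : w ∈ OB), {u : V | G.dist w u ≤ R w ω} := by
      intro u hu
      simp only [Set.mem_setOf_eq] at hu
      rcases Relation.ReflTransGen.cases_tail hu with rfl | ⟨z, hvz, hzu⟩
      · exact Or.inl rfl
      · right
        rcases hzu with ⟨hXz, hdz⟩ | ⟨hXu, hdu⟩
        · exact Set.mem_biUnion (show z ∈ OB from ⟨hXz, hvz⟩) hdz
        · refine Set.mem_biUnion (show u ∈ OB from ⟨hXu, hu⟩) ?_
          simp [SimpleGraph.dist_self]
    have hfin : ({v} ∪ ⋃ (w : V) (_ : w ∈ OB), {u : V | G.dist w u ≤ R w ω}).Finite :=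
      (Set.finite_singleton v).union
        (hOBfin.biUnion (fun w _ => ballFinite hball w (R w ω)))
    exact (hfin.subset hsub).not_infinite hω
  -- (b) chain to w
  obtain ⟨k, c, hch, hst, hend⟩ := reach_chain hconn hvw hXw
  -- (c) stopping
  haveI : DecidablePred fun j => j ≤ k ∧ (100*s ≤ G.dist v (c j) ∨ s ≤ R (c j) ω) :=
    Classical.decPred _
  have hex : ∃ j, j ≤ k ∧ (100*s ≤ G.dist v (c j) ∨ s ≤ R (c j) ω) :=
    ⟨k, le_refl _, Or.inl (by rw [hend]; exact hfar)⟩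
  obtain ⟨j, ⟨hjk, hjbad⟩, hjmin'⟩ : ∃ j, (j ≤ k ∧ (100*s ≤ G.dist v (c j) ∨ s ≤ R (c j) ω)) ∧
      ∀ i, i < j → ¬(i ≤ k ∧ (100*s ≤ G.dist v (c i) ∨ s ≤ R (c i) ω)) :=
    ⟨Nat.find hex, Nat.find_spec hex, fun i hi => Nat.find_min hex hi⟩
  have hjmin : ∀ i, i < j → G.dist v (c i) < 100*s ∧ R (c i) ω < s := by
    intro i hi
    have := hjmin' i hi
    push_neg at this
    have h2 := this (le_trans hi.le hjk)
    exact ⟨by omega, by omega⟩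
  by_cases hbig : s ≤ R (c j) ω
  · -- error event
    right
    refine Set.mem_iUnion.mpr ⟨c j, hch.1 j hjk, hbig, ?_⟩
    rcases Nat.eq_zero_or_pos j with rfl | hjpos
    · rcases hst with h0 | h0
      · rw [h0, SimpleGraph.dist_self]; omega
      · omega
    · obtain ⟨j', rfl⟩ : ∃ j', j = j' + 1 := ⟨j - 1, by omega⟩
      have htri : G.dist v (c (j'+1)) ≤ G.dist v (c j') + G.dist (c j') (c (j'+1)) :=
        SimpleGraph.Connected.dist_triangle hconn
      have hlk := hch.2 j' (by omega)
      have hm := hjmin j' (by omega)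
      omega
  · -- crossing event
    left
    have hfarj : 100*s ≤ G.dist v (c j) := by
      rcases hjbad with h | h
      · exact h
      · omega
    have hRj : R (c j) ω < s := by omega
    have hstep : ∀ i, i < j → G.dist v (c (i+1)) ≤ G.dist v (c i) + 2*s := by
      intro i hi
      have htri : G.dist v (c (i+1)) ≤ G.dist v (c i) + G.dist (c i) (c (i+1)) :=
        SimpleGraph.Connected.dist_triangle hconn
      have hlk := hch.2 i (lt_of_lt_of_le hi hjk)
      have h1 := (hjmin i hi).2
      have h2 : R (c (i+1)) ω < s := by
        rcases Nat.lt_or_ge (i+1) j with h | h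
        · exact (hjmin _ h).2
        · have hij : i + 1 = j := by omega
          rw [hij]; exact hRj
      omega
    have hR0 : R (c 0) ω < s := by
      rcases Nat.eq_zero_or_pos j with hj0 | hpos
      · rw [← hj0]; exact hRj
      · exact (hjmin 0 hpos).2
    have hstart : G.dist v (c 0) ≤ 30*s := by
      rcases hst with h0 | h0
      · rw [h0, SimpleGraph.dist_self]; omega
      · omega
    refine ⟨j, c, chain_mono hch hjk, ?_, ?_, hstart, hfarj⟩
    · intro i hi
      rcases Nat.lt_or_ge i j with h | h
      · exact (hjmin i h).2
      · have hij : i = j := by omega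
        rw [hij]; exact hRj
    · intro i hi
      rcases Nat.lt_or_ge i j with h | h
      · have := (hjmin i h).1; omega
      · have hij : i = j := by omega
        subst hij
        rcases Nat.eq_zero_or_pos i with hi0 | hpos
        · rw [hi0]; omega
        · obtain ⟨i', rfl⟩ : ∃ i', i = i' + 1 := ⟨i - 1, by omega⟩
          have := hstep i' (by omega)
          have := (hjmin i' (by omega)).1
          omega

section Extract
variable {V : Type*} {Ω : Type} {G : SimpleGraph V} {X : V → Ω → Bool} {R : V → Ω → ℕ}

lemma shell_hit {f : ℕ → ℕ} {k lo step : ℕ} (h0 : f 0 < lo) (hk : lo ≤ f k)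
    (hstep : ∀ i, i < k → f (i+1) ≤ f i + step) :
    ∃ i, i ≤ k ∧ lo ≤ f i ∧ f i < lo + step := by
  classical
  have hex : ∃ i, i ≤ k ∧ lo ≤ f i := ⟨k, le_refl _, hk⟩
  obtain ⟨j, ⟨hjk, hjlo⟩, hjmin⟩ : ∃ j, (j ≤ k ∧ lo ≤ f j) ∧ ∀ i, i < j → ¬(i ≤ k ∧ lo ≤ f i) :=
    ⟨Nat.find hex, Nat.find_spec hex, fun i hi => Nat.find_min hex hi⟩
  refine ⟨j, hjk, hjlo, ?_⟩
  rcases Nat.eq_zero_or_pos j with rfl | hpos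
  · omega
  · obtain ⟨j', rfl⟩ : ∃ j', j = j' + 1 := ⟨j - 1, by omega⟩
    have h1 := hjmin j' (by omega)
    have h2 := hstep j' (by omega)
    push_neg at h1
    have := h1 (by omega)
    omega

lemma chain_to_cross (hconn : G.Connected) {ω : Ω} {c : ℕ → V} {k : ℕ}
    (hch : ChainP G X R ω c k) {r : ℕ} (hr : 1 ≤ r)
    (hrad : ∀ i, i ≤ k → R (c i) ω < r) (x : V)
    (hstart : G.dist x (c 0) ≤ 30*r) (hfar : 100*r ≤ G.dist x (c k)) :
    ω ∈ CrossSet G X R x r := by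
  classical
  have hex : ∃ j, j ≤ k ∧ 100*r ≤ G.dist x (c j) := ⟨k, le_refl _, hfar⟩
  obtain ⟨j, ⟨hjk, hjlo⟩, hjmin'⟩ : ∃ j, (j ≤ k ∧ 100*r ≤ G.dist x (c j)) ∧
      ∀ i, i < j → ¬(i ≤ k ∧ 100*r ≤ G.dist x (c i)) :=
    ⟨Nat.find hex, Nat.find_spec hex, fun i hi => Nat.find_min hex hi⟩
  have hjmin : ∀ i, i < j → G.dist x (c i) < 100*r := by
    intro i hi
    have := hjmin' i hi
    push_neg at this
    exact this (le_trans hi.le hjk)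
  refine ⟨j, c, chain_mono hch hjk, fun i hi => hrad i (hi.trans hjk), ?_, ?_, hjlo⟩
  · intro i hi
    rcases Nat.lt_or_ge i j with h | h
    · have := hjmin i h; omega
    · have hij : i = j := by omega
      rw [hij]
      rcases Nat.eq_zero_or_pos j with hj0 | hpos
      · rw [hj0]; omega
      · obtain ⟨j', rfl⟩ : ∃ j', j = j' + 1 := ⟨j - 1, by omega⟩
        have htri : G.dist x (c (j'+1)) ≤ G.dist x (c j') + G.dist (c j') (c (j'+1)) :=
          SimpleGraph.Connected.dist_triangle hconn
        have hlk := hch.2 j' (by omega)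
        have h1 := hrad j' (by omega)
        have h2 := hrad (j'+1) (by omega)
        have h3 := hjmin j' (by omega)
        omega
  · rcases Nat.eq_zero_or_pos j with hj0 | hpos
    · omega
    · have := hjmin 0 hpos; omega

lemma cross_extract (hconn : G.Connected) (w : V) (r : ℕ) (hr : 1 ≤ r) {ω : Ω}
    (hx : ω ∈ CrossSet G X R w (10*r)) (herr : ω ∉ UErrSet G X R w r)
    (NX NY : Finset V)
    (hNXcov : ∀ a, 400*r ≤ G.dist w a → G.dist w a < 402*r → ∃ x ∈ NX, G.dist x a ≤ r)
    (hNYcov : ∀ a, 700*r ≤ G.dist w a → G.dist w a < 702*r → ∃ y ∈ NY, G.dist y a ≤ r) :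
    ∃ x ∈ NX, ∃ y ∈ NY, ω ∈ CrossSet G X R x r ∧ ω ∈ CrossSet G X R y r := by
  obtain ⟨k, c, hch, hrad10, hcont, hst, hend⟩ := hx
  -- all radii on the chain are < r
  have hrad : ∀ i, i ≤ k → R (c i) ω < r := by
    intro i hi
    by_contra hbig
    refine herr (Set.mem_iUnion.mpr ⟨c i, hch.1 i hi, by omega, ?_⟩)
    have := hcont i hi
    omega
  have hstep : ∀ i, i < k → G.dist w (c (i+1)) ≤ G.dist w (c i) + 2*r := by
    intro i hi
    have htri : G.dist w (c (i+1)) ≤ G.dist w (c i) + G.dist (c i) (c (i+1)) :=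
      SimpleGraph.Connected.dist_triangle hconn
    have hlk := hch.2 i hi
    have h1 := hrad i hi.le
    have h2 := hrad (i+1) hi
    omega
  -- hit both shells
  have h0x : G.dist w (c 0) < 400*r := by omega
  have hkx : 400*r ≤ G.dist w (c k) := by omega
  have h0y : G.dist w (c 0) < 700*r := by omega
  have hky : 700*r ≤ G.dist w (c k) := by omega
  obtain ⟨ix, hixk, hixlo, hixhi⟩ :=
    shell_hit (f := fun i => G.dist w (c i)) (lo := 400*r) (step := 2*r) h0x hkx hstep
  obtain ⟨iy, hiyk, hiylo, hiyhi⟩ :=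
    shell_hit (f := fun i => G.dist w (c i)) (lo := 700*r) (step := 2*r) h0y hky hstep
  obtain ⟨x, hxNX, hxa⟩ := hNXcov (c ix) hixlo (by omega)
  obtain ⟨y, hyNY, hya⟩ := hNYcov (c iy) hiylo (by omega)
  refine ⟨x, hxNX, y, hyNY, ?_, ?_⟩
  · -- suffix chain from ix
    have hch' : ChainP G X R ω (fun i => c (ix + i)) (k - ix) :=
      ⟨fun i hi => hch.1 _ (by omega), fun i hi => by
        have h := hch.2 (ix + i) (by omega)
        have heq : ix + (i+1) = (ix + i) + 1 := by omega
        show G.dist (c (ix+i)) (c (ix+(i+1))) ≤ R (c (ix+i)) ω + R (c (ix+(i+1))) ω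
        rw [heq]; exact h⟩
    refine chain_to_cross hconn hch' hr (fun i hi => hrad _ (by omega)) x ?_ ?_
    · show G.dist x (c (ix + 0)) ≤ 30*r
      rw [Nat.add_zero]; omega
    · have hixk' : ix + (k - ix) = k := by omega
      have htri : G.dist w (c k) ≤ G.dist w x + G.dist x (c k) :=
        SimpleGraph.Connected.dist_triangle hconn
      have htri2 : G.dist w x ≤ G.dist w (c ix) + G.dist (c ix) x := by
        have := SimpleGraph.Connected.dist_triangle hconn (u := w) (v := c ix) (w := x)
        exact this
      have hxc : G.dist (c ix) x ≤ r := by rw [SimpleGraph.dist_comm]; exact hxa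
      show 100*r ≤ G.dist x (c (ix + (k - ix)))
      rw [hixk']
      omega
  · have hch' : ChainP G X R ω (fun i => c (iy + i)) (k - iy) :=
      ⟨fun i hi => hch.1 _ (by omega), fun i hi => by
        have h := hch.2 (iy + i) (by omega)
        have heq : iy + (i+1) = (iy + i) + 1 := by omega
        show G.dist (c (iy+i)) (c (iy+(i+1))) ≤ R (c (iy+i)) ω + R (c (iy+(i+1))) ω
        rw [heq]; exact h⟩
    refine chain_to_cross hconn hch' hr (fun i hi => hrad _ (by omega)) y ?_ ?_
    · show G.dist y (c (iy + 0)) ≤ 30*r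
      rw [Nat.add_zero]; omega
    · have hiyk' : iy + (k - iy) = k := by omega
      have htri : G.dist w (c k) ≤ G.dist w y + G.dist y (c k) :=
        SimpleGraph.Connected.dist_triangle hconn
      have htri2 : G.dist w y ≤ G.dist w (c iy) + G.dist (c iy) y :=
        SimpleGraph.Connected.dist_triangle hconn
      have hyc : G.dist (c iy) y ≤ r := by rw [SimpleGraph.dist_comm]; exact hya
      show 100*r ≤ G.dist y (c (iy + (k - iy)))
      rw [hiyk']
      omega

end Extract

lemma net_exists {V : Type*} {G : SimpleGraph V} {dimA C' : ℝ}
    (hconn : G.Connected) (hC' : 0 < C') (hdimA : 0 < dimA)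
    (hdim : ∀ (v : V) (r : ℕ), 1 ≤ r → ∀ ε : ℝ, 0 < ε → ε < 1 →
      ∀ s : Finset V, (∀ x ∈ s, G.dist v x ≤ r) →
        (∀ x ∈ s, ∀ y ∈ s, x ≠ y → ε * r ≤ (G.dist x y : ℝ)) →
        (s.card : ℝ) ≤ C' * ε ^ (-dimA))
    (hball : ∀ (w : V) (t : ℕ), 1 ≤ t → ∀ F : Finset V,
      (∀ x ∈ F, G.dist w x ≤ t) → (F.card : ℝ) ≤ C' * (2 * t : ℝ) ^ dimA)
    (w : V) (r lo hi : ℕ) (hr : 1 ≤ r) (hlohi : r < hi) (hhi : hi ≤ 702*r) :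
    ∃ NET : Finset V, (∀ x ∈ NET, lo ≤ G.dist w x ∧ G.dist w x < hi) ∧
      ((NET.card : ℝ) ≤ C' * (702:ℝ) ^ dimA) ∧
      ∀ a : V, lo ≤ G.dist w a → G.dist w a < hi → ∃ x ∈ NET, G.dist x a ≤ r := by
  classical
  have hhi1 : 1 ≤ hi := by omega
  set shellF : Finset V :=
    ((ballFinite hball w hi).toFinset.filter (fun u => lo ≤ G.dist w u ∧ G.dist w u < hi))
    with hshellF
  set cand : Finset (Finset V) :=
    (shellF.powerset.filter (fun t => ∀ x ∈ t, ∀ y ∈ t, x ≠ y → r ≤ G.dist x y)) with hcand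
  have hne : cand.Nonempty := ⟨∅, by simp [hcand]⟩
  obtain ⟨NET, hNETmem, hNETmax⟩ := Finset.exists_max_image cand Finset.card hne
  rw [hcand, Finset.mem_filter, Finset.mem_powerset] at hNETmem
  obtain ⟨hNETsub, hNETsep⟩ := hNETmem
  have hNETshell : ∀ x ∈ NET, lo ≤ G.dist w x ∧ G.dist w x < hi := by
    intro x hx
    have := hNETsub hx
    rw [hshellF, Finset.mem_filter] at this
    exact this.2
  refine ⟨NET, hNETshell, ?_, ?_⟩
  · -- cardinality bound
    have hhiR : (0:ℝ) < (hi:ℝ) := by exact_mod_cast hhi1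
    have hrR : (0:ℝ) < (r:ℝ) := by exact_mod_cast hr
    have hε : (0:ℝ) < (r:ℝ)/(hi:ℝ) := by positivity
    have hε1 : (r:ℝ)/(hi:ℝ) < 1 := by
      rw [div_lt_one hhiR]; exact_mod_cast hlohi
    have key := hdim w hi hhi1 _ hε hε1 NET
      (fun x hx => le_of_lt (hNETshell x hx).2)
      (fun x hx y hy hxy => by
        have hsep := hNETsep x hx y hy hxy
        have : ((r:ℝ)/(hi:ℝ)) * (hi:ℝ) = (r:ℝ) := div_mul_cancel₀ _ (ne_of_gt hhiR)
        rw [this]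
        exact_mod_cast hsep)
    refine key.trans ?_
    have heq : ((r:ℝ)/(hi:ℝ)) ^ (-dimA) = ((hi:ℝ)/(r:ℝ)) ^ dimA := by
      rw [Real.rpow_neg hε.le, ← Real.inv_rpow hε.le, inv_div]
    rw [heq]
    have h702 : (hi:ℝ)/(r:ℝ) ≤ 702 := by
      rw [div_le_iff₀ hrR]
      exact_mod_cast le_trans hhi (by nlinarith)
    exact mul_le_mul_of_nonneg_left
      (Real.rpow_le_rpow (by positivity) h702 hdimA.le) hC'.le
  · -- covering
    intro a hlo hahi
    by_contra hno
    push_neg at hno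
    have haNET : a ∉ NET := fun ha => by
      have := hno a ha
      simp [SimpleGraph.dist_self] at this
    have hains : insert a NET ∈ cand := by
      rw [hcand, Finset.mem_filter, Finset.mem_powerset]
      constructor
      · intro x hx
        rcases Finset.mem_insert.mp hx with rfl | hx
        · rw [hshellF, Finset.mem_filter]
          refine ⟨?_, hlo, hahi⟩
          rw [Set.Finite.mem_toFinset]
          exact le_of_lt hahi
        · exact hNETsub hx
      · intro x hx y hy hxy
        rcases Finset.mem_insert.mp hx with rfl | hx' <;>
          rcases Finset.mem_insert.mp hy with rfl | hy'
        · exact absurd rfl hxy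
        · have := hno y hy'
          rw [SimpleGraph.dist_comm] at this
          omega
        · have := hno x hx'
          omega
        · exact hNETsep x hx' y hy' hxy
    have := hNETmax _ hains
    rw [Finset.card_insert_of_notMem haNET] at this
    omega

section Tail

noncomputable def eTail (ν : Measure ℕ) (dimA : ℝ) (s : ℕ) : ℝ≥0∞ :=
  ∫⁻ m, Set.indicator {m : ℕ | s ≤ m} (fun m => (m : ℝ≥0∞) ^ dimA) m ∂ν

lemma eTail_eq (ν : Measure ℕ) (dimA : ℝ) (s : ℕ) :
    eTail ν dimA s = (ν.withDensity (fun m => (m:ℝ≥0∞)^dimA)) {m : ℕ | s ≤ m} := by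
  rw [eTail, withDensity_apply _ (Set.to_countable _).measurableSet,
    lintegral_indicator (Set.to_countable _).measurableSet]

lemma eTail_le (ν : Measure ℕ) (dimA : ℝ) (s : ℕ) :
    eTail ν dimA s ≤ ∫⁻ m, (m : ℝ≥0∞) ^ dimA ∂ν :=
  lintegral_mono fun m => Set.indicator_le_self _ _ m

lemma eTail_tendsto (ν : Measure ℕ) (dimA : ℝ)
    (hmom : ∫⁻ m, (m : ℝ≥0∞) ^ dimA ∂ν < ⊤) :
    Filter.Tendsto (eTail ν dimA) Filter.atTop (nhds 0) := by
  have heq : eTail ν dimA = fun s => (ν.withDensity (fun m => (m:ℝ≥0∞)^dimA)) {m : ℕ | s ≤ m} :=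
    funext (eTail_eq ν dimA)
  rw [heq]
  have hempty : ⋂ s : ℕ, {m : ℕ | s ≤ m} = ∅ := by
    ext m
    simp only [Set.mem_iInter, Set.mem_setOf_eq, Set.mem_empty_iff_false, iff_false, not_forall]
    exact ⟨m + 1, by omega⟩
  have := tendsto_measure_iInter_atTop (μ := ν.withDensity (fun m => (m:ℝ≥0∞)^dimA))
    (s := fun s : ℕ => {m : ℕ | s ≤ m})
    (fun i => ((Set.to_countable _).measurableSet).nullMeasurableSet)
    (fun i j hij m hm => by simp only [Set.mem_setOf_eq] at hm ⊢; omega)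
    ⟨0, by
      show (ν.withDensity fun m => (m:ℝ≥0∞) ^ dimA) {m : ℕ | 0 ≤ m} ≠ ⊤
      rw [withDensity_apply _ (Set.to_countable _).measurableSet]
      refine ne_of_lt (lt_of_le_of_lt ?_ hmom)
      exact setLIntegral_le_lintegral _ _⟩
  have h2 : (ν.withDensity fun m => (m:ℝ≥0∞) ^ dimA) (⋂ s : ℕ, {m : ℕ | s ≤ m}) = 0 := by
    rw [hempty]; exact measure_empty
  rw [h2] at this
  exact this

end Tail

section Prob
variable {V : Type*} [Countable V] {Ω : Type} [MeasurableSpace Ω] {P : Measure Ω}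
  {G : SimpleGraph V} {X : V → Ω → Bool} {R : V → Ω → ℕ} {ν : Measure ℕ} {p dimA C' : ℝ}

lemma hit_union_bound
    (hjoint : ∀ (v : V) (s : Set ℕ),
      P {ω | X v ω = true ∧ R v ω ∈ s} = ENNReal.ofReal p * ν s)
    (S : V → Set ℕ) :
    P (⋃ u : V, HitSet X R u (S u)) ≤ ENNReal.ofReal p * ∑' u : V, ν (S u) := by
  refine (measure_iUnion_le _).trans ?_
  rw [← ENNReal.tsum_mul_left]
  exact le_of_eq (tsum_congr fun u => hjoint u (S u))

lemma uerr_bound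
    (hball : ∀ (w : V) (t : ℕ), 1 ≤ t → ∀ F : Finset V,
      (∀ x ∈ F, G.dist w x ≤ t) → (F.card : ℝ) ≤ C' * (2 * t : ℝ) ^ dimA)
    (hjoint : ∀ (v : V) (s : Set ℕ),
      P {ω | X v ω = true ∧ R v ω ∈ s} = ENNReal.ofReal p * ν s)
    (hC' : 0 < C') (hdimA : 0 < dimA)
    (v : V) (s : ℕ) (hs : 1 ≤ s) :
    P (UErrSet G X R v s)
      ≤ ENNReal.ofReal p * (ENNReal.ofReal (C' * 2042 ^ dimA) * eTail ν dimA s) := by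
  refine (hit_union_bound hjoint _).trans (mul_le_mul_right ?_ _)
  have h1 : ∀ u : V, ν {m : ℕ | s ≤ m ∧ G.dist v u ≤ m + 1020*s}
      = ∫⁻ m, Set.indicator {m : ℕ | s ≤ m ∧ G.dist v u ≤ m + 1020*s}
          (fun _ => (1:ℝ≥0∞)) m ∂ν := by
    intro u
    rw [lintegral_indicator (Set.to_countable _).measurableSet, setLIntegral_one]
  calc ∑' u : V, ν {m : ℕ | s ≤ m ∧ G.dist v u ≤ m + 1020*s}
      = ∫⁻ m, ∑' u : V, Set.indicator {m : ℕ | s ≤ m ∧ G.dist v u ≤ m + 1020*s}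
          (fun _ => (1:ℝ≥0∞)) m ∂ν := by
        rw [lintegral_tsum (fun u => (measurable_of_countable _).aemeasurable)]
        exact tsum_congr h1
    _ ≤ ∫⁻ m, Set.indicator {m : ℕ | s ≤ m}
          (fun m => ENNReal.ofReal (C' * 2042 ^ dimA) * (m : ℝ≥0∞) ^ dimA) m ∂ν := by
        refine lintegral_mono fun m => ?_
        by_cases hsm : s ≤ m
        · have hm1 : 1 ≤ m := le_trans hs hsm
          calc ∑' u : V, Set.indicator {m : ℕ | s ≤ m ∧ G.dist v u ≤ m + 1020*s}
                (fun _ => (1:ℝ≥0∞)) m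
              ≤ ∑' u : V, (if G.dist v u ≤ m + 1020*s then (1:ℝ≥0∞) else 0) := by
                refine ENNReal.tsum_le_tsum fun u => ?_
                rw [Set.indicator_apply]
                split_ifs with h1' h2'
                · exact le_refl _
                · exact absurd h1'.2 h2'
                · exact zero_le
                · exact le_refl _
            _ ≤ ENNReal.ofReal (C' * (2 * (m + 1020*s) : ℝ) ^ dimA) := by
                have := tsumBall hball v (m + 1020*s) (by omega)
                push_cast at this ⊢
                exact this
            _ ≤ Set.indicator {m : ℕ | s ≤ m}
                (fun m => ENNReal.ofReal (C' * 2042 ^ dimA) * (m : ℝ≥0∞) ^ dimA) m := by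
                rw [Set.indicator_of_mem (by exact hsm)]
                have hle : (2 * ((m:ℝ) + 1020*s)) ≤ 2042 * m := by
                  have h1 : (s:ℝ) ≤ m := by exact_mod_cast hsm
                  nlinarith
                have hb : (2 * ((m:ℝ) + 1020*s)) ^ dimA ≤ (2042 * (m:ℝ)) ^ dimA :=
                  Real.rpow_le_rpow (by positivity) hle hdimA.le
                have hsplit : ((2042:ℝ) * m) ^ dimA = 2042 ^ dimA * (m:ℝ) ^ dimA :=
                  Real.mul_rpow (by norm_num) (by positivity)
                calc ENNReal.ofReal (C' * (2 * ((m:ℝ) + 1020*s)) ^ dimA)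
                    ≤ ENNReal.ofReal (C' * 2042 ^ dimA * (m:ℝ) ^ dimA) := by
                      refine ENNReal.ofReal_le_ofReal ?_
                      rw [mul_assoc, ← hsplit]
                      exact mul_le_mul_of_nonneg_left hb hC'.le
                  _ = ENNReal.ofReal (C' * 2042 ^ dimA) * ENNReal.ofReal ((m:ℝ) ^ dimA) := by
                      rw [ENNReal.ofReal_mul (by positivity)]
                  _ = ENNReal.ofReal (C' * 2042 ^ dimA) * (m : ℝ≥0∞) ^ dimA := by
                      rw [← ENNReal.ofReal_rpow_of_nonneg (by positivity) hdimA.le,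
                        ENNReal.ofReal_natCast]
        · have hz1 : ∀ u : V, Set.indicator {m : ℕ | s ≤ m ∧ G.dist v u ≤ m + 1020*s}
              (fun _ => (1:ℝ≥0∞)) m = 0 := fun u =>
            Set.indicator_of_notMem (fun hmem => hsm hmem.1) _
          rw [tsum_congr hz1]
          simp
    _ = ENNReal.ofReal (C' * 2042 ^ dimA) * eTail ν dimA s := by
        rw [eTail, ← lintegral_const_mul _ (measurable_of_countable _)]
        refine lintegral_congr fun m => ?_
        rw [Set.indicator_apply, Set.indicator_apply]
        split_ifs <;> simp

lemma cross_base
    (hball : ∀ (w : V) (t : ℕ), 1 ≤ t → ∀ F : Finset V,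
      (∀ x ∈ F, G.dist w x ≤ t) → (F.card : ℝ) ≤ C' * (2 * t : ℝ) ^ dimA)
    (hjoint : ∀ (v : V) (s : Set ℕ),
      P {ω | X v ω = true ∧ R v ω ∈ s} = ENNReal.ofReal p * ν s)
    [IsProbabilityMeasure ν]
    (w : V) (s : ℕ) (hs : 1 ≤ s) :
    P (CrossSet G X R w s)
      ≤ ENNReal.ofReal p * ENNReal.ofReal (C' * (2 * (102*s) : ℝ) ^ dimA) := by
  have hsub : CrossSet G X R w s
      ⊆ ⋃ u : V, HitSet X R u (if G.dist w u ≤ 102*s then Set.univ else ∅) := by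
    rintro ω ⟨k, c, hch, hrad, hcont, hst, hend⟩
    refine Set.mem_iUnion.mpr ⟨c k, hch.1 k le_rfl, ?_⟩
    rw [if_pos (hcont k le_rfl)]
    trivial
  refine le_trans (measure_mono hsub) ((hit_union_bound hjoint _).trans
    (mul_le_mul_right ?_ _))
  calc ∑' u : V, ν (if G.dist w u ≤ 102*s then Set.univ else (∅ : Set ℕ))
      = ∑' u : V, (if G.dist w u ≤ 102*s then (1:ℝ≥0∞) else 0) :=
        tsum_congr (fun u => by split_ifs <;> simp)
    _ ≤ _ := by
        have := tsumBall hball w (102*s) (by omega)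
        push_cast at this ⊢
        exact this

end Prob

section Indep
variable {V : Type*} [Countable V] {Ω : Type} [MeasurableSpace Ω] {P : Measure Ω}
  {G : SimpleGraph V} {X : V → Ω → Bool} {R : V → Ω → ℕ}

/-- the σ-algebra generated by the marks of the vertices in `S`. -/
def markSig (X : V → Ω → Bool) (R : V → Ω → ℕ) (S : Set V) : MeasurableSpace Ω :=
  ⨆ u ∈ S, MeasurableSpace.comap (fun ω => (X u ω, R u ω)) inferInstance

lemma markSig_meas {S : Set V} {u : V} (hu : u ∈ S) (A : Set (Bool × ℕ)) :
    MeasurableSet[markSig X R S] ((fun ω => (X u ω, R u ω)) ⁻¹' A) := by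
  have h1 : MeasurableSet[MeasurableSpace.comap (fun ω => (X u ω, R u ω)) inferInstance]
      ((fun ω => (X u ω, R u ω)) ⁻¹' A) :=
    ⟨A, (Set.to_countable A).measurableSet, rfl⟩
  exact MeasurableSpace.le_def.mp
    (le_iSup₂ (f := fun (u : V) (_ : u ∈ S) =>
      MeasurableSpace.comap (fun ω => (X u ω, R u ω)) inferInstance) u hu) _ h1

lemma markSig_boolEv {S : Set V} {u : V} (hu : u ∈ S) :
    MeasurableSet[markSig X R S] {ω | X u ω = true} := by
  have : {ω | X u ω = true} = (fun ω => (X u ω, R u ω)) ⁻¹' {q | q.1 = true} := rfl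
  rw [this]; exact markSig_meas hu _

lemma markSig_radLt {S : Set V} {u : V} (hu : u ∈ S) (r : ℕ) :
    MeasurableSet[markSig X R S] {ω | R u ω < r} := by
  have : {ω | R u ω < r} = (fun ω => (X u ω, R u ω)) ⁻¹' {q | q.2 < r} := rfl
  rw [this]; exact markSig_meas hu _

lemma markSig_link {S : Set V} {u u' : V} (hu : u ∈ S) (hu' : u' ∈ S) (d : ℕ) :
    MeasurableSet[markSig X R S] {ω | d ≤ R u ω + R u' ω} := by
  have hrepr : {ω | d ≤ R u ω + R u' ω} = ⋃ n : ℕ,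
      ((fun ω => (X u ω, R u ω)) ⁻¹' {q | q.2 = n}) ∩
       ((fun ω => (X u' ω, R u' ω)) ⁻¹' {q | d ≤ n + q.2}) := by
    ext ω
    simp only [Set.mem_setOf_eq, Set.mem_iUnion, Set.mem_inter_iff, Set.mem_preimage]
    constructor
    · intro h; exact ⟨R u ω, rfl, h⟩
    · rintro ⟨n, rfl, h⟩; exact h
  rw [hrepr]
  exact MeasurableSet.iUnion fun n => (markSig_meas hu _).inter (markSig_meas hu' _)

/-- the body of the crossing event, for a fixed chain. -/
def crossEv (G : SimpleGraph V) (X : V → Ω → Bool) (R : V → Ω → ℕ)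
    (z : V) (r k : ℕ) (c : ℕ → V) : Set Ω :=
  {ω | ChainP G X R ω c k ∧ (∀ i, i ≤ k → R (c i) ω < r) ∧
    (∀ i, i ≤ k → G.dist z (c i) ≤ 102*r) ∧ G.dist z (c 0) ≤ 30*r ∧ 100*r ≤ G.dist z (c k)}

lemma crossEv_congr {G : SimpleGraph V} {z : V} {r k : ℕ} {c c' : ℕ → V}
    (h : ∀ i, i ≤ k → c i = c' i) : crossEv G X R z r k c = crossEv G X R z r k c' := by
  ext ω
  have h0 := h 0 (by omega)
  have hk := h k le_rfl
  constructor <;> rintro ⟨⟨hop, hlk⟩, hrad, hcont, hst, hend⟩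
  · exact ⟨⟨fun i hi => (h i hi) ▸ hop i hi,
      fun i hi => (h i (by omega)) ▸ (h (i+1) (by omega)) ▸ hlk i hi⟩,
      fun i hi => (h i hi) ▸ hrad i hi, fun i hi => (h i hi) ▸ hcont i hi,
      h0 ▸ hst, hk ▸ hend⟩
  · exact ⟨⟨fun i hi => (h i hi) ▸ hop i hi,
      fun i hi => (h i (by omega)) ▸ (h (i+1) (by omega)) ▸ hlk i hi⟩,
      fun i hi => (h i hi) ▸ hrad i hi, fun i hi => (h i hi) ▸ hcont i hi,
      h0 ▸ hst, hk ▸ hend⟩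

lemma markSig_crossEv {G : SimpleGraph V} {S : Set V} {z : V} {r : ℕ}
    (hS : ∀ u, G.dist z u ≤ 102*r → u ∈ S) (k : ℕ) (c : ℕ → V) :
    MeasurableSet[markSig X R S] (crossEv G X R z r k c) := by
  by_cases hdet : (∀ i, i ≤ k → G.dist z (c i) ≤ 102*r) ∧ G.dist z (c 0) ≤ 30*r ∧
      100*r ≤ G.dist z (c k)
  · have hmem : ∀ i, i ≤ k → c i ∈ S := fun i hi => hS _ (hdet.1 i hi)
    have hrepr : crossEv G X R z r k c =
        (⋂ i ∈ Finset.range (k+1), ({ω | X (c i) ω = true} ∩ {ω | R (c i) ω < r})) ∩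
          ⋂ i ∈ Finset.range k,
            {ω | G.dist (c i) (c (i+1)) ≤ R (c i) ω + R (c (i+1)) ω} := by
      ext ω
      simp only [crossEv, Set.mem_setOf_eq, Set.mem_inter_iff, Set.mem_iInter,
        Finset.mem_range, Nat.lt_succ_iff, ChainP]
      constructor
      · rintro ⟨⟨hop, hlk⟩, hrad, -⟩
        exact ⟨fun i hi => ⟨hop i hi, hrad i hi⟩, fun i hi => hlk i hi⟩
      · rintro ⟨h1, h2⟩
        exact ⟨⟨fun i hi => (h1 i hi).1, fun i hi => h2 i hi⟩,
          fun i hi => (h1 i hi).2, hdet.1, hdet.2.1, hdet.2.2⟩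
    rw [hrepr]
    refine MeasurableSet.inter ?_ ?_
    · refine MeasurableSet.iInter fun i => MeasurableSet.iInter fun hi => ?_
      rw [Finset.mem_range, Nat.lt_succ_iff] at hi
      exact (markSig_boolEv (hmem i hi)).inter (markSig_radLt (hmem i hi) r)
    · refine MeasurableSet.iInter fun i => MeasurableSet.iInter fun hi => ?_
      rw [Finset.mem_range] at hi
      exact markSig_link (hmem i hi.le) (hmem (i+1) hi) _
  · have : crossEv G X R z r k c = ∅ := by
      ext ω
      simp only [crossEv, Set.mem_setOf_eq, Set.mem_empty_iff_false, iff_false]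
      rintro ⟨-, -, hcont, hst, hend⟩
      exact hdet ⟨hcont, hst, hend⟩
    rw [this]
    exact @MeasurableSet.empty _ (markSig X R S)

lemma markSig_cross {G : SimpleGraph V} {S : Set V} {z : V} {r : ℕ}
    (hS : ∀ u, G.dist z u ≤ 102*r → u ∈ S) :
    MeasurableSet[markSig X R S] (CrossSet G X R z r) := by
  have hrepr : CrossSet G X R z r = ⋃ (k : ℕ), ⋃ (c : Fin (k+1) → V),
      crossEv G X R z r k (fun i => c ⟨min i k, by omega⟩) := by
    ext ω
    simp only [Set.mem_iUnion]
    constructor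
    · rintro ⟨k, c, hc⟩
      refine ⟨k, fun i => c i, ?_⟩
      rw [crossEv_congr (c' := c) (fun i hi => by simp [Nat.min_eq_left hi])]
      exact hc
    · rintro ⟨k, c, hc⟩
      exact ⟨k, _, hc⟩
  rw [hrepr]
  exact MeasurableSet.iUnion fun k => MeasurableSet.iUnion fun c => markSig_crossEv hS k _

lemma indep_pair
    (hind : iIndepFun
      (fun v ω => (X v ω, R v ω)) P)
    (hXm : ∀ v, Measurable (X v)) (hRm : ∀ v, Measurable (R v))
    {S T : Set V} (hST : Disjoint S T) {A B : Set Ω}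
    (hA : MeasurableSet[markSig X R S] A) (hB : MeasurableSet[markSig X R T] B) :
    P (A ∩ B) = P A * P B := by
  have h_le : ∀ u : V,
      MeasurableSpace.comap (fun ω => (X u ω, R u ω)) inferInstance ≤ ‹MeasurableSpace Ω› :=
    fun u => MeasurableSpace.le_def.mpr (by
      rintro s ⟨A', hA', rfl⟩
      exact ((hXm u).prodMk (hRm u)) hA')
  have hIndep := ProbabilityTheory.indep_iSup_of_disjoint h_le hind.iIndep hST
  exact (ProbabilityTheory.Indep_iff _ _ _).mp hIndep A B hA hB

end Indep

section Recursion
variable {V : Type*} [Countable V] {Ω : Type} [MeasurableSpace Ω] {P : Measure Ω}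
  {G : SimpleGraph V} {X : V → Ω → Bool} {R : V → Ω → ℕ} {ν : Measure ℕ} {p dimA C' : ℝ}

lemma cross_recursion
    (hconn : G.Connected) (hC' : 0 < C') (hdimA : 0 < dimA)
    (hdim : ∀ (v : V) (r : ℕ), 1 ≤ r → ∀ ε : ℝ, 0 < ε → ε < 1 →
      ∀ s : Finset V, (∀ x ∈ s, G.dist v x ≤ r) →
        (∀ x ∈ s, ∀ y ∈ s, x ≠ y → ε * r ≤ (G.dist x y : ℝ)) →
        (s.card : ℝ) ≤ C' * ε ^ (-dimA))
    (hball : ∀ (w : V) (t : ℕ), 1 ≤ t → ∀ F : Finset V,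
      (∀ x ∈ F, G.dist w x ≤ t) → (F.card : ℝ) ≤ C' * (2 * t : ℝ) ^ dimA)
    (hjoint : ∀ (v : V) (s : Set ℕ),
      P {ω | X v ω = true ∧ R v ω ∈ s} = ENNReal.ofReal p * ν s)
    (hind : iIndepFun
      (fun v ω => (X v ω, R v ω)) P)
    (hXm : ∀ v, Measurable (X v)) (hRm : ∀ v, Measurable (R v))
    (w : V) (r : ℕ) (hr : 1 ≤ r) :
    P (CrossSet G X R w (10*r))
      ≤ ENNReal.ofReal p * (ENNReal.ofReal (C' * 2042 ^ dimA) * eTail ν dimA r)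
        + (ENNReal.ofReal (C' * 702 ^ dimA))^2 * (⨆ x : V, P (CrossSet G X R x r))^2 := by
  obtain ⟨NX, hNXshell, hNXcard, hNXcov⟩ :=
    net_exists hconn hC' hdimA hdim hball w r (400*r) (402*r) hr (by omega) (by omega)
  obtain ⟨NY, hNYshell, hNYcard, hNYcov⟩ :=
    net_exists hconn hC' hdimA hdim hball w r (700*r) (702*r) hr (by omega) (by omega)
  have hsplit : CrossSet G X R w (10*r) ⊆ UErrSet G X R w r ∪
      ⋃ x ∈ NX, ⋃ y ∈ NY, (CrossSet G X R x r ∩ CrossSet G X R y r) := by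
    intro ω hω
    by_cases herr : ω ∈ UErrSet G X R w r
    · exact Or.inl herr
    · right
      obtain ⟨x, hx, y, hy, h1, h2⟩ := cross_extract hconn w r hr hω herr NX NY hNXcov hNYcov
      exact Set.mem_biUnion hx (Set.mem_biUnion hy ⟨h1, h2⟩)
  refine le_trans (measure_mono hsplit) (le_trans (measure_union_le _ _) ?_)
  refine add_le_add (uerr_bound hball hjoint hC' hdimA w r hr) ?_
  have hterm : ∀ x ∈ NX, ∀ y ∈ NY,
      P (CrossSet G X R x r ∩ CrossSet G X R y r)
        ≤ (⨆ z : V, P (CrossSet G X R z r))^2 := by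
    intro x hx y hy
    have hxs := hNXshell x hx
    have hys := hNYshell y hy
    have hdisj : Disjoint {u : V | G.dist x u ≤ 102*r} {u : V | G.dist y u ≤ 102*r} := by
      rw [Set.disjoint_left]
      intro u hu1 hu2
      simp only [Set.mem_setOf_eq] at hu1 hu2
      have t1 : G.dist x y ≤ G.dist x u + G.dist u y := SimpleGraph.Connected.dist_triangle hconn
      have t2 : G.dist u y = G.dist y u := SimpleGraph.dist_comm
      have t3 : G.dist w y ≤ G.dist w x + G.dist x y := SimpleGraph.Connected.dist_triangle hconn
      omega
    have := indep_pair hind hXm hRm hdisj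
      (markSig_cross (S := {u : V | G.dist x u ≤ 102*r}) (fun u h => h))
      (markSig_cross (S := {u : V | G.dist y u ≤ 102*r}) (fun u h => h))
    rw [this, pow_two]
    exact mul_le_mul' (le_iSup (fun z => P (CrossSet G X R z r)) x)
      (le_iSup (fun z => P (CrossSet G X R z r)) y)
  calc P (⋃ x ∈ NX, ⋃ y ∈ NY, (CrossSet G X R x r ∩ CrossSet G X R y r))
      ≤ ∑ x ∈ NX, P (⋃ y ∈ NY, (CrossSet G X R x r ∩ CrossSet G X R y r)) :=
        measure_biUnion_finset_le NX _
    _ ≤ ∑ x ∈ NX, ∑ y ∈ NY, P (CrossSet G X R x r ∩ CrossSet G X R y r) :=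
        Finset.sum_le_sum fun x hx => measure_biUnion_finset_le NY _
    _ ≤ ∑ x ∈ NX, ∑ y ∈ NY, (⨆ z : V, P (CrossSet G X R z r))^2 :=
        Finset.sum_le_sum fun x hx => Finset.sum_le_sum fun y hy => hterm x hx y hy
    _ = (NX.card : ℝ≥0∞) * ((NY.card : ℝ≥0∞) * (⨆ z : V, P (CrossSet G X R z r))^2) := by
        simp [Finset.sum_const, nsmul_eq_mul, mul_assoc]
    _ ≤ (ENNReal.ofReal (C' * 702 ^ dimA)) *
          ((ENNReal.ofReal (C' * 702 ^ dimA)) * (⨆ z : V, P (CrossSet G X R z r))^2) := by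
        have h1 : (NX.card : ℝ≥0∞) ≤ ENNReal.ofReal (C' * 702 ^ dimA) := by
          rw [← ENNReal.ofReal_natCast]
          exact ENNReal.ofReal_le_ofReal hNXcard
        have h2 : (NY.card : ℝ≥0∞) ≤ ENNReal.ofReal (C' * 702 ^ dimA) := by
          rw [← ENNReal.ofReal_natCast]
          exact ENNReal.ofReal_le_ofReal hNYcard
        exact mul_le_mul' h1 (mul_le_mul' h2 (le_refl _))
    _ = (ENNReal.ofReal (C' * 702 ^ dimA))^2 * (⨆ z : V, P (CrossSet G X R z r))^2 := by
        ring

end Recursion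

lemma ennreal_cancel_aux {γ κ : ℝ≥0∞} (hγt : γ ≠ ⊤) (hκ0 : κ ≠ 0) (hκt : κ ≠ ⊤) :
    γ / (2 * κ) * κ ≤ γ / 2 := by
  have h : γ / (2 * κ) * κ = γ / 2 * (κ⁻¹ * κ) := by
    rw [div_eq_mul_inv, div_eq_mul_inv,
      ENNReal.mul_inv (Or.inl (by norm_num)) (Or.inl (by norm_num))]
    ring
  rw [h, ENNReal.inv_mul_cancel hκ0 hκt, mul_one]

lemma ennreal_np_gamma {a : ℝ≥0∞} (ha0 : a ≠ 0) (hat : a ≠ ⊤) : a * (2 * a)⁻¹ = 2⁻¹ := by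
  rw [ENNReal.mul_inv (Or.inl (by norm_num)) (Or.inl (by norm_num)), mul_comm (2:ℝ≥0∞)⁻¹ a⁻¹,
    ← mul_assoc, ENNReal.mul_inv_cancel ha0 hat, one_mul]


/-- subcriticality of Boolean percolation on doubling graphs: let `Γ` be
a countably infinite connected doubling graph, i.e. every `(ε r)`-separated subset of a
ball of radius `r` has at most `C' ε^{-dimA}` points, and let `ν` be a law on ℕ with
finite `dimA`-moment.  Then there is `p₀ > 0` such that for every retention parameter
`p ≤ p₀` and every Bernoulli marked point process (i.i.d. pairs `(X_v, R_v)`, `X_v`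
Bernoulli(p), `R_v ~ ν` independent of `X`), almost surely every connected component of
the random graph `𝒢(𝒳,ℛ)` is finite. -/
theorem stmt11 {V : Type*} [Countable V] [Infinite V]
    (G : SimpleGraph V) (hconn : G.Connected)
    (dimA C' : ℝ) (hC' : 0 < C') (hdimA : 0 < dimA)
    (hdim : ∀ (v : V) (r : ℕ), 1 ≤ r → ∀ ε : ℝ, 0 < ε → ε < 1 →
      ∀ s : Finset V, (∀ x ∈ s, G.dist v x ≤ r) →
        (∀ x ∈ s, ∀ y ∈ s, x ≠ y → ε * r ≤ (G.dist x y : ℝ)) →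
        (s.card : ℝ) ≤ C' * ε ^ (-dimA))
    (ν : Measure ℕ) [IsProbabilityMeasure ν]
    (hmom : ∫⁻ m, (m : ℝ≥0∞) ^ dimA ∂ν < ⊤) :
    ∃ p₀ : ℝ, 0 < p₀ ∧
      ∀ (p : ℝ), 0 < p → p ≤ p₀ →
      ∀ (Ω : Type) (_ : MeasurableSpace Ω) (P : Measure Ω), IsProbabilityMeasure P →
      ∀ (X : V → Ω → Bool) (R : V → Ω → ℕ),
        (∀ v, Measurable (X v)) → (∀ v, Measurable (R v)) →
        iIndepFun
          (fun v ω => (X v ω, R v ω)) P →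
        (∀ v, P {ω | X v ω = true} = ENNReal.ofReal p) →
        (∀ v, Measure.map (R v) P = ν) →
        (∀ (v : V) (s : Set ℕ),
          P {ω | X v ω = true ∧ R v ω ∈ s} = ENNReal.ofReal p * ν s) →
        P {ω | ∃ v : V, {u : V | Relation.ReflTransGen (boolRel G X R ω) v u}.Infinite}
          = 0 := by
  classical
  have hball : ∀ (w : V) (t : ℕ), 1 ≤ t → ∀ F : Finset V,
      (∀ x ∈ F, G.dist w x ≤ t) → (F.card : ℝ) ≤ C' * (2 * t : ℝ) ^ dimA :=
    fun w t ht F hF => cardBall hconn hC' hdimA hdim w t ht F hF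
  -- constants
  set Np : ℝ≥0∞ := ENNReal.ofReal (C' * 702 ^ dimA) with hNp
  set K1 : ℝ≥0∞ := ENNReal.ofReal (C' * 2042 ^ dimA) with hK1
  set A1 : ℝ≥0∞ := ENNReal.ofReal (C' * (2 * (102 * ((1:ℕ)):ℝ)) ^ dimA) with hA1
  set Etot : ℝ≥0∞ := ∫⁻ m, (m : ℝ≥0∞) ^ dimA ∂ν with hEtot
  have hNp0 : Np ≠ 0 := by
    rw [hNp, ne_eq, ENNReal.ofReal_eq_zero, not_le]
    positivity
  have hNpt : Np ≠ ⊤ := ENNReal.ofReal_ne_top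
  have hNp2 : Np^2 ≠ 0 := pow_ne_zero _ hNp0
  have hNp2t : Np^2 ≠ ⊤ := by
    rw [pow_two]; exact ENNReal.mul_ne_top hNpt hNpt
  set γ : ℝ≥0∞ := (2 * Np^2)⁻¹ with hγ
  have hγ0 : γ ≠ 0 := by
    rw [hγ, ne_eq, ENNReal.inv_eq_zero]
    exact ENNReal.mul_ne_top (by norm_num) hNp2t
  have hγt : γ ≠ ⊤ := by
    rw [hγ, ne_eq, ENNReal.inv_eq_top]
    exact mul_ne_zero (by norm_num) hNp2
  set KE : ℝ≥0∞ := K1 * Etot + A1 + 1 with hKE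
  have hKE0 : KE ≠ 0 := by
    rw [hKE]
    intro h
    simp only [add_eq_zero] at h
    exact one_ne_zero h.2
  have hKEt : KE ≠ ⊤ := by
    rw [hKE]
    refine ENNReal.add_ne_top.mpr ⟨ENNReal.add_ne_top.mpr ⟨?_, ENNReal.ofReal_ne_top⟩, by norm_num⟩
    exact ENNReal.mul_ne_top ENNReal.ofReal_ne_top hmom.ne
  have hqpos : 0 < γ / (2 * KE) := ENNReal.div_pos hγ0 (ENNReal.mul_ne_top (by norm_num) hKEt)
  have hqt : γ / (2 * KE) ≠ ⊤ :=
    (ENNReal.div_lt_top hγt (mul_ne_zero (by norm_num) hKE0)).ne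
  refine ⟨min 1 ((γ / (2 * KE)).toReal), lt_min one_pos (ENNReal.toReal_pos hqpos.ne' hqt), ?_⟩
  intro p hp hple Ω mΩ P hPprob X R hXm hRm hind hPX hPR hjoint
  -- smallness of p
  have hofp : ENNReal.ofReal p ≤ γ / (2 * KE) := by
    calc ENNReal.ofReal p ≤ ENNReal.ofReal ((γ / (2 * KE)).toReal) :=
          ENNReal.ofReal_le_ofReal (hple.trans (min_le_right _ _))
      _ = γ / (2 * KE) := ENNReal.ofReal_toReal hqt
  have hmaster : ∀ z : ℝ≥0∞, z ≤ KE → ENNReal.ofReal p * z ≤ γ / 2 := by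
    intro z hz
    calc ENNReal.ofReal p * z ≤ (γ / (2 * KE)) * KE := mul_le_mul' hofp hz
      _ ≤ γ / 2 := ennreal_cancel_aux hγt hKE0 hKEt
  set piF : ℕ → ℝ≥0∞ := fun r => ⨆ x : V, P (CrossSet G X R x r) with hpiF
  -- base case
  have hbase : piF 1 ≤ γ / 2 := by
    refine iSup_le fun x => ?_
    refine le_trans (cross_base hball hjoint x 1 le_rfl) ?_
    refine le_trans (mul_le_mul_right (le_of_eq hA1.symm) _) (hmaster A1 ?_)
    rw [hKE]
    calc A1 ≤ K1 * Etot + A1 := le_add_self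
      _ ≤ K1 * Etot + A1 + 1 := le_add_right (le_refl _)
  -- recursion
  have hrec : ∀ k : ℕ, piF (10^(k+1)) ≤
      ENNReal.ofReal p * (K1 * eTail ν dimA (10^k)) + Np^2 * (piF (10^k))^2 := by
    intro k
    have h10 : (10:ℕ)^(k+1) = 10 * 10^k := by ring
    rw [h10]
    exact iSup_le fun x => cross_recursion hconn hC' hdimA hdim hball hjoint hind hXm hRm
      x (10^k) (Nat.one_le_pow _ _ (by norm_num))
  have htail_le : ∀ k : ℕ, K1 * eTail ν dimA (10^k) ≤ KE := by
    intro k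
    calc K1 * eTail ν dimA (10^k) ≤ K1 * Etot :=
          mul_le_mul_right (eTail_le ν dimA _) _
      _ ≤ KE := by rw [hKE]; exact le_add_right (le_add_right (le_refl _))
  -- uniform bound by induction
  have hunif : ∀ k : ℕ, piF (10^k) ≤ γ := by
    intro k
    induction k with
    | zero => simpa using hbase.trans (ENNReal.half_le_self)
    | succ k ih =>
      refine (hrec k).trans ?_
      have h1 : ENNReal.ofReal p * (K1 * eTail ν dimA (10^k)) ≤ γ / 2 :=
        hmaster _ (htail_le k)
      have h2 : Np^2 * (piF (10^k))^2 ≤ γ / 2 := by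
        have hπ2 : (piF (10^k))^2 ≤ γ * γ := by
          rw [pow_two]; exact mul_le_mul' ih ih
        calc Np^2 * (piF (10^k))^2 ≤ Np^2 * (γ * γ) := mul_le_mul_right hπ2 _
          _ = (Np^2 * (2 * Np^2)⁻¹) * γ := by rw [hγ]; ring
          _ = 2⁻¹ * γ := by rw [ennreal_np_gamma hNp2 hNp2t]
          _ = γ / 2 := by rw [div_eq_mul_inv, mul_comm]
      calc ENNReal.ofReal p * (K1 * eTail ν dimA (10^k)) + Np^2 * (piF (10^k))^2
          ≤ γ / 2 + γ / 2 := add_le_add h1 h2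
        _ = γ := ENNReal.add_halves γ
  -- decay step
  have hdecay : ∀ k : ℕ, piF (10^(k+1)) ≤
      ENNReal.ofReal p * (K1 * eTail ν dimA (10^k)) + 2⁻¹ * piF (10^k) := by
    intro k
    refine (hrec k).trans (add_le_add (le_refl _) ?_)
    calc Np^2 * (piF (10^k))^2 = (Np^2 * piF (10^k)) * piF (10^k) := by
          rw [pow_two (piF (10^k)), ← mul_assoc]
      _ ≤ (Np^2 * γ) * piF (10^k) := mul_le_mul_left (mul_le_mul_right (hunif k) _) _
      _ = 2⁻¹ * piF (10^k) := by rw [hγ, ennreal_np_gamma hNp2 hNp2t]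
  -- tail term tends to zero
  have hbtend : Filter.Tendsto (fun k : ℕ => ENNReal.ofReal p * (K1 * eTail ν dimA (10^k)))
      Filter.atTop (nhds 0) := by
    have h1 : Filter.Tendsto (fun k : ℕ => eTail ν dimA (10^k)) Filter.atTop (nhds 0) :=
      (eTail_tendsto ν dimA hmom).comp
        (tendsto_pow_atTop_atTop_of_one_lt (by norm_num))
    have h2 := ENNReal.Tendsto.const_mul (a := ENNReal.ofReal p * K1) h1
      (Or.inr (ENNReal.mul_ne_top ENNReal.ofReal_ne_top ENNReal.ofReal_ne_top))
    simpa [mul_assoc] using h2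
  -- per-vertex conclusion
  have hperc : ∀ v : V,
      P {ω | {u : V | Relation.ReflTransGen (boolRel G X R ω) v u}.Infinite} = 0 := by
    intro v
    refine le_antisymm ?_ zero_le
    have key : ∀ ε : NNReal, 0 < ε →
        P {ω | {u : V | Relation.ReflTransGen (boolRel G X R ω) v u}.Infinite}
          ≤ (ε : ℝ≥0∞) := by
      intro ε hε
      set δ : ℝ≥0∞ := (ε : ℝ≥0∞) / 4 with hδ
      have hδ0 : δ ≠ 0 := by
        rw [hδ]
        exact (ENNReal.div_pos (by exact_mod_cast hε.ne') (by norm_num)).ne'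
      -- eventually the tail term is ≤ δ
      obtain ⟨K₀, hK₀⟩ := (Filter.eventually_atTop).mp
        ((ENNReal.tendsto_nhds_zero.mp hbtend) δ (pos_iff_ne_zero.mpr hδ0))
      -- geometric decay claim
      have hgeo : ∀ j : ℕ, piF (10^(K₀ + j)) ≤ (2⁻¹:ℝ≥0∞)^j * γ + 2 * δ := by
        intro j
        induction j with
        | zero =>
          simp only [Nat.add_zero, pow_zero, one_mul]
          exact (hunif K₀).trans (self_le_add_right _ _)
        | succ j ih =>
          have hstep := hdecay (K₀ + j)
          have hb := hK₀ (K₀ + j) (by omega)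
          have : piF (10^(K₀ + (j+1))) ≤ δ + 2⁻¹ * ((2⁻¹:ℝ≥0∞)^j * γ + 2 * δ) := by
            rw [show K₀ + (j+1) = (K₀ + j) + 1 by omega]
            exact hstep.trans (add_le_add hb (mul_le_mul_right ih _))
          refine this.trans ?_
          have h2d : (2⁻¹:ℝ≥0∞) * (2 * δ) = δ := by
            rw [← mul_assoc, ENNReal.inv_mul_cancel (by norm_num) (by norm_num), one_mul]
          rw [mul_add, h2d, ← mul_assoc, ← pow_succ']
          rw [two_mul]
          calc δ + ((2⁻¹:ℝ≥0∞)^(j+1) * γ + δ) = (2⁻¹:ℝ≥0∞)^(j+1) * γ + (δ + δ) := by ring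
            _ ≤ _ := le_refl _
      -- choose j₀ with geometric part ≤ δ
      have hpow : Filter.Tendsto (fun j : ℕ => (2⁻¹:ℝ≥0∞)^j * γ) Filter.atTop (nhds 0) := by
        have := ENNReal.tendsto_pow_atTop_nhds_zero_of_lt_one
          (by norm_num : (2⁻¹:ℝ≥0∞) < 1)
        have h2 := ENNReal.Tendsto.mul_const (b := γ) this (Or.inr hγt)
        simpa using h2
      obtain ⟨j₀, hj₀⟩ := (Filter.eventually_atTop).mp
        ((ENNReal.tendsto_nhds_zero.mp hpow) δ (pos_iff_ne_zero.mpr hδ0))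
      set k := K₀ + j₀ with hk
      have hπk : piF (10^k) ≤ 3 * δ := by
        refine (hgeo j₀).trans ?_
        have := hj₀ j₀ le_rfl
        calc (2⁻¹:ℝ≥0∞)^j₀ * γ + 2 * δ ≤ δ + 2 * δ := add_le_add this (le_refl _)
          _ = 3 * δ := by ring
      -- combine
      have hsplit := perc_subset (X := X) (R := R) hconn hball v (10^k)
        (Nat.one_le_pow _ _ (by norm_num))
      have hucb : P (UErrSet G X R v (10^k)) ≤ δ := by
        refine le_trans (uerr_bound hball hjoint hC' hdimA v (10^k)
          (Nat.one_le_pow _ _ (by norm_num))) ?_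
        have := hK₀ k (by omega)
        rwa [hK1] at this
      have hccb : P (CrossSet G X R v (10^k)) ≤ piF (10^k) :=
        le_iSup (fun x => P (CrossSet G X R x (10^k))) v
      calc P {ω | {u : V | Relation.ReflTransGen (boolRel G X R ω) v u}.Infinite}
          ≤ P (CrossSet G X R v (10^k) ∪ UErrSet G X R v (10^k)) := measure_mono hsplit
        _ ≤ P (CrossSet G X R v (10^k)) + P (UErrSet G X R v (10^k)) := measure_union_le _ _
        _ ≤ 3 * δ + δ := add_le_add (hccb.trans hπk) hucb
        _ = 4 * δ := by ring
        _ = (ε : ℝ≥0∞) := by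
            rw [hδ, ENNReal.mul_div_cancel' (by norm_num) (by norm_num)]
    refine ENNReal.le_of_forall_pos_le_add fun ε hε _ => ?_
    rw [zero_add]
    exact key ε hε
  -- countable union
  have hrepr : {ω : Ω | ∃ v : V,
      {u : V | Relation.ReflTransGen (boolRel G X R ω) v u}.Infinite}
      = ⋃ v : V, {ω | {u : V | Relation.ReflTransGen (boolRel G X R ω) v u}.Infinite} := by
    ext ω; simp [Set.mem_iUnion]
  rw [hrepr]
  refine le_antisymm ?_ zero_le
  refine le_trans (measure_iUnion_le _) ?_
  simp [hperc]
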